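/- Let V be a combinatorial vector field on a finite simplicial complex X of dimension d with 0 < γ < 1/(d+1). For σ ∈ X \ Fix V define A_σ := {x ∈ |σ⁺| : t_v(x) ≥ γ for all v ∈ σ⁻} ∪ |σ⁻|, B_σ := {x ∈ |σ⁺| : t_v(x) ≤ γ for some v ∈ σ⁻}, and C_σ := A_σ ∩ B_σ. Then A_σ, B_σ, and C_σ are contractible subsets of |X|. -/

import Mathlib

set_option linter.unusedSectionVars false

/-- The closed geometric simplex spanned by a set `s` of vertices. -/
def gsS {V : Type*} [Fintype V] (s : Set V) : Set (V → ℝ) :=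
  {x | (∀ v, 0 ≤ x v) ∧ (∀ v, v ∉ s → x v = 0) ∧ ∑ v, x v = 1}

section Aux
variable {V : Type*} [Fintype V] [DecidableEq V]

lemma gsS_mono {s t : Set V} (h : s ⊆ t) : gsS s ⊆ gsS t := by
  rintro x ⟨h1, h2, h3⟩
  exact ⟨h1, fun v hv => h2 v fun hvs => hv (h hvs), h3⟩

lemma gsS_convex {s : Set V} {x y : V → ℝ} (hx : x ∈ gsS s) (hy : y ∈ gsS s)
    {t : ℝ} (h0 : 0 ≤ t) (h1 : t ≤ 1) : (1 - t) • x + t • y ∈ gsS s := by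
  obtain ⟨hx1, hx2, hx3⟩ := hx
  obtain ⟨hy1, hy2, hy3⟩ := hy
  refine ⟨fun v => ?_, fun v hv => ?_, ?_⟩
  · have := hx1 v; have := hy1 v
    simp only [Pi.add_apply, Pi.smul_apply, smul_eq_mul]
    nlinarith
  · simp only [Pi.add_apply, Pi.smul_apply, smul_eq_mul, hx2 v hv, hy2 v hv]; ring
  · simp only [Pi.add_apply, Pi.smul_apply, smul_eq_mul]
    rw [Finset.sum_add_distrib, ← Finset.mul_sum, ← Finset.mul_sum, hx3, hy3]; ring

lemma starShaped_contractible (S : Set (V → ℝ)) {c : V → ℝ} (hc : c ∈ S)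
    (h : ∀ x ∈ S, ∀ t : ℝ, 0 ≤ t → t ≤ 1 → (1 - t) • x + t • c ∈ S) :
    ContractibleSpace S := by
  rw [contractible_iff_id_nullhomotopic]
  refine ⟨⟨c, hc⟩, ⟨{
    toFun := fun q => ⟨(1 - (q.1 : ℝ)) • (q.2 : V → ℝ) + (q.1 : ℝ) • c,
      h q.2 q.2.2 q.1 q.1.2.1 q.1.2.2⟩
    continuous_toFun := by
      refine Continuous.subtype_mk ?_ _
      fun_prop
    map_zero_left := fun x => by ext v; simp
    map_one_left := fun x => by ext v; simp }⟩⟩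

/-- The barycenter of a finite set of vertices. -/
noncomputable def baryC (σm : Finset V) : V → ℝ := fun v => if v ∈ σm then (σm.card : ℝ)⁻¹ else 0

lemma baryC_mem {σm : Finset V} (hmne : σm.Nonempty) : baryC σm ∈ gsS (↑σm : Set V) := by
  have hcard0 : 0 < (σm.card : ℝ) := by exact_mod_cast Finset.card_pos.mpr hmne
  refine ⟨fun v => ?_, fun v hv => ?_, ?_⟩
  · by_cases h : v ∈ σm <;> simp [baryC, h, (inv_pos.mpr hcard0).le]
  · simp only [Finset.mem_coe] at hv; simp [baryC, hv]
  · rw [show (∑ v, baryC σm v) = ∑ v, if v ∈ σm then (σm.card : ℝ)⁻¹ else 0 from rfl,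
      Finset.sum_ite_mem, Finset.univ_inter, Finset.sum_const, nsmul_eq_mul]
    exact mul_inv_cancel₀ hcard0.ne'

/-- A vertex of the simplex. -/
def vertC (w : V) : V → ℝ := fun v => if v = w then 1 else 0

lemma vertC_mem {σp : Finset V} {w : V} (hw : w ∈ σp) : vertC w ∈ gsS (↑σp : Set V) := by
  refine ⟨fun v => ?_, fun v hv => ?_, ?_⟩
  · by_cases h : v = w <;> simp [vertC, h]
  · simp only [Finset.mem_coe] at hv
    have : v ≠ w := fun h => hv (h ▸ hw)
    simp [vertC, this]
  · simp [vertC, Finset.sum_ite_eq']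

end Aux

section Tau
variable {V : Type*} [Fintype V] [DecidableEq V]

/-- Retraction parameter: smallest `t` such that `(1-t)•b + t•x` has min coordinate `≤ γ`. -/
noncomputable def tauC (σm : Finset V) (hmne : σm.Nonempty) (γ : ℝ) (x : V → ℝ) : ℝ :=
  σm.inf' hmne fun v => ((σm.card : ℝ)⁻¹ - γ) / max ((σm.card : ℝ)⁻¹ - x v) ((σm.card : ℝ)⁻¹ - γ)

variable {σm : Finset V} (hmne : σm.Nonempty) {γ : ℝ} (hγ : γ < (σm.card : ℝ)⁻¹)
include hγ

lemma tauC_cont : Continuous (tauC σm hmne γ) := by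
  apply Continuous.finset_inf'_apply hmne
  intro v _
  exact continuous_const.div
    (((continuous_const.sub (continuous_apply v)).max continuous_const))
    (fun x => ne_of_gt (lt_of_lt_of_le (by linarith) (le_max_right _ _)))

lemma tauC_pos (x : V → ℝ) : 0 < tauC σm hmne γ x := by
  rw [tauC, Finset.lt_inf'_iff]
  intro v _
  exact div_pos (by linarith) (lt_of_lt_of_le (by linarith) (le_max_right _ _))

lemma tauC_le_one (x : V → ℝ) : tauC σm hmne γ x ≤ 1 := by
  obtain ⟨v, hv⟩ := hmne
  refine le_trans (Finset.inf'_le _ hv) ?_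
  rw [div_le_one (lt_of_lt_of_le (by linarith) (le_max_right _ _))]
  exact le_max_right _ _

lemma tauC_key (x : V → ℝ) {v : V} (hv : v ∈ σm) :
    tauC σm hmne γ x * ((σm.card : ℝ)⁻¹ - x v) ≤ (σm.card : ℝ)⁻¹ - γ := by
  set β := ((σm.card : ℝ)⁻¹) with hβ
  rcases le_or_gt (β - x v) 0 with h | h
  · exact le_trans (mul_nonpos_of_nonneg_of_nonpos (tauC_pos hmne hγ x).le h) (by linarith)
  · have h1 : tauC σm hmne γ x ≤ (β - γ) / max (β - x v) (β - γ) := Finset.inf'_le _ hv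
    have h2 : (β - γ) / max (β - x v) (β - γ) ≤ (β - γ) / (β - x v) :=
      div_le_div_of_nonneg_left (by linarith) h (le_max_left _ _)
    calc tauC σm hmne γ x * (β - x v) ≤ ((β - γ) / (β - x v)) * (β - x v) :=
          mul_le_mul_of_nonneg_right (h1.trans h2) h.le
      _ = β - γ := div_mul_cancel₀ _ h.ne'

lemma tauC_eq_one (x : V → ℝ) (hall : ∀ v ∈ σm, γ ≤ x v) : tauC σm hmne γ x = 1 := by
  refine le_antisymm (tauC_le_one hmne hγ x) ?_
  rw [tauC, Finset.le_inf'_iff]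
  intro v hv
  rw [max_eq_right (by have := hall v hv; linarith)]
  rw [le_div_iff₀ (by linarith), one_mul]

lemma tauC_min (x : V → ℝ) {v0 : V} (hv0 : v0 ∈ σm) (hmin : ∀ v ∈ σm, x v0 ≤ x v)
    (hle : x v0 ≤ γ) :
    tauC σm hmne γ x * ((σm.card : ℝ)⁻¹ - x v0) = (σm.card : ℝ)⁻¹ - γ := by
  set β := ((σm.card : ℝ)⁻¹) with hβ
  have hpos : 0 < β - x v0 := by linarith
  have heq : tauC σm hmne γ x = (β - γ) / (β - x v0) := by
    refine le_antisymm ?_ ?_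
    · refine le_trans (Finset.inf'_le _ hv0) ?_
      rw [max_eq_left (by linarith)]
    · rw [tauC, Finset.le_inf'_iff]
      intro v hv
      refine div_le_div_of_nonneg_left (by linarith) ?_ ?_
      · exact lt_of_lt_of_le (by linarith) (le_max_right _ _)
      · exact max_le (by have := hmin v hv; linarith) (by linarith)
  rw [heq, div_mul_cancel₀ _ hpos.ne']

end Tau

section CPart
variable {V : Type*} [Fintype V] [DecidableEq V]

lemma C_contr (σm σp : Finset V) (hmne : σm.Nonempty) (hsub : σm ⊆ σp)
    (w : V) (hw : w ∈ σp) (hwm : w ∉ σm)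
    (γ : ℝ) (hγ0 : 0 < γ) (hγβ : γ < (σm.card : ℝ)⁻¹) :
    ContractibleSpace
      (↥(({x | x ∈ gsS (↑σp : Set V) ∧ ∀ v ∈ σm, γ ≤ x v} ∪ gsS (↑σm : Set V)) ∩
          {x | x ∈ gsS (↑σp : Set V) ∧ ∃ v ∈ σm, x v ≤ γ})) := by
  classical
  have hcard0 : 0 < (σm.card : ℝ) := by exact_mod_cast Finset.card_pos.mpr hmne
  set β : ℝ := (σm.card : ℝ)⁻¹ with hβdef
  have hβ0 : 0 < β := inv_pos.mpr hcard0
  set A : Set (V → ℝ) :=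
    {x | x ∈ gsS (↑σp : Set V) ∧ ∀ v ∈ σm, γ ≤ x v} ∪ gsS (↑σm : Set V) with hAdef
  set B : Set (V → ℝ) := {x | x ∈ gsS (↑σp : Set V) ∧ ∃ v ∈ σm, x v ≤ γ} with hBdef
  set b : V → ℝ := baryC σm with hbdef
  have hb : b ∈ gsS (↑σm : Set V) := baryC_mem hmne
  have hbp : b ∈ gsS (↑σp : Set V) := gsS_mono (Finset.coe_subset.mpr hsub) hb
  have hbval : ∀ v ∈ σm, b v = β := fun v hv => by simp [hbdef, baryC, hv, hβdef]
  -- the key membership lemma for the first homotopy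
  have hmem : ∀ x ∈ A ∩ B, ∀ T : ℝ, tauC σm hmne γ x ≤ T → T ≤ 1 →
      (1 - T) • b + T • x ∈ A ∩ B := by
    intro x hx T hT1 hT2
    have hT0 : 0 ≤ T := le_trans (tauC_pos hmne hγβ x).le hT1
    obtain ⟨hxA, hxp, vb, hvb, hvbγ⟩ := hx
    cases hxA with
    | inl h =>
      have hτ1 : tauC σm hmne γ x = 1 := tauC_eq_one hmne hγβ x h.2
      have hTeq : T = 1 := le_antisymm hT2 (hτ1 ▸ hT1)
      have hxx : (1 - T) • b + T • x = x := by rw [hTeq]; simp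
      rw [hxx]
      exact ⟨Or.inl h, hxp, vb, hvb, hvbγ⟩
    | inr h =>
      obtain ⟨v0, hv0, hmin⟩ := σm.exists_min_image x hmne
      have hv0γ : x v0 ≤ γ := (hmin vb hvb).trans hvbγ
      have hkey : β - γ ≤ T * (β - x v0) := by
        have heq := tauC_min hmne hγβ x hv0 hmin hv0γ
        have hpos : 0 ≤ β - x v0 := by linarith
        nlinarith [mul_le_mul_of_nonneg_right hT1 hpos]
      refine ⟨Or.inr (gsS_convex hb h hT0 hT2),
        gsS_convex hbp hxp hT0 hT2, v0, hv0, ?_⟩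
      have : ((1 - T) • b + T • x) v0 = (1 - T) * β + T * x v0 := by
        simp [Pi.add_apply, hbval v0 hv0]
      rw [this]; nlinarith
  -- the point we contract to
  set μ : ℝ := (σm.card : ℝ) * γ with hμdef
  have hμ0 : 0 < μ := mul_pos hcard0 hγ0
  have hμ1 : μ < 1 := by
    have := mul_lt_mul_of_pos_left hγβ hcard0
    rwa [mul_inv_cancel₀ hcard0.ne'] at this
  set p : V → ℝ := (1 - μ) • vertC w + μ • b with hpdef
  have hp : p ∈ gsS (↑σp : Set V) := gsS_convex (vertC_mem hw) hbp hμ0.le hμ1.le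
  have hpval : ∀ v ∈ σm, p v = γ := by
    intro v hv
    have hvw : v ≠ w := fun h => hwm (h ▸ hv)
    have : p v = (1 - μ) * vertC w v + μ * b v := by simp [hpdef]
    rw [this, hbval v hv, show vertC w v = 0 from if_neg hvw]
    rw [hμdef, hβdef]
    field_simp
    ring
  have hpmem : p ∈ A ∩ B := by
    obtain ⟨vm, hvm⟩ := hmne
    exact ⟨Or.inl ⟨hp, fun v hv => (hpval v hv).ge⟩, hp, vm, hvm, (hpval vm hvm).le⟩
  -- the second homotopy's membership lemma
  have hrge : ∀ x : V → ℝ, ∀ v ∈ σm,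
      γ ≤ ((1 - tauC σm hmne γ x) • b + tauC σm hmne γ x • x) v := by
    intro x v hv
    have hk := tauC_key hmne hγβ x hv
    have : ((1 - tauC σm hmne γ x) • b + tauC σm hmne γ x • x) v
        = (1 - tauC σm hmne γ x) * β + tauC σm hmne γ x * x v := by
      simp [Pi.add_apply, hbval v hv]
    rw [this]; nlinarith
  have hlin : ∀ y ∈ A ∩ B, (∀ v ∈ σm, γ ≤ y v) → ∀ s : ℝ, 0 ≤ s → s ≤ 1 →
      (1 - s) • y + s • p ∈ A ∩ B := by
    rintro y ⟨-, hyp, vb, hvb, hvbγ⟩ hgey s hs0 hs1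
    refine ⟨Or.inl ⟨gsS_convex hyp hp hs0 hs1, fun v hv => ?_⟩,
      gsS_convex hyp hp hs0 hs1, vb, hvb, ?_⟩
    · have : ((1 - s) • y + s • p) v = (1 - s) * y v + s * p v := by simp
      rw [this, hpval v hv]
      have := hgey v hv; nlinarith
    · have : ((1 - s) • y + s • p) vb = (1 - s) * y vb + s * p vb := by simp
      rw [this, hpval vb hvb]
      nlinarith
  -- build the contraction
  rw [contractible_iff_id_nullhomotopic]
  have hτc : Continuous (tauC σm hmne γ) := tauC_cont hmne hγβ
  refine ⟨⟨p, hpmem⟩, ⟨?_⟩⟩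
  have hsc : Continuous fun q : unitInterval × ↥(A ∩ B) => ((q.1 : ℝ)) :=
    continuous_subtype_val.comp continuous_fst
  have hxc : Continuous fun q : unitInterval × ↥(A ∩ B) => ((q.2 : V → ℝ)) :=
    continuous_subtype_val.comp continuous_snd
  have hτq : Continuous fun q : unitInterval × ↥(A ∩ B) => tauC σm hmne γ (q.2 : V → ℝ) :=
    hτc.comp hxc
  have hTc : Continuous fun q : unitInterval × ↥(A ∩ B) =>
      1 - (q.1 : ℝ) * (1 - tauC σm hmne γ (q.2 : V → ℝ)) :=
    continuous_const.sub (hsc.mul (continuous_const.sub hτq))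
  let rmap : C(↥(A ∩ B), ↥(A ∩ B)) :=
    ⟨fun x => ⟨(1 - tauC σm hmne γ (x : V → ℝ)) • b + tauC σm hmne γ (x : V → ℝ) • (x : V → ℝ),
       hmem x x.2 _ le_rfl (tauC_le_one hmne hγβ x)⟩,
     Continuous.subtype_mk
       ((((continuous_const.sub (hτc.comp continuous_subtype_val)).smul continuous_const)).add
         ((hτc.comp continuous_subtype_val).smul continuous_subtype_val)) _⟩
  have hTge : ∀ q : unitInterval × ↥(A ∩ B),
      tauC σm hmne γ (q.2 : V → ℝ) ≤ 1 - (q.1 : ℝ) * (1 - tauC σm hmne γ (q.2 : V → ℝ)) :=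
    fun q => by nlinarith [q.1.2.1, q.1.2.2, tauC_le_one hmne hγβ (q.2 : V → ℝ)]
  have hTle : ∀ q : unitInterval × ↥(A ∩ B),
      1 - (q.1 : ℝ) * (1 - tauC σm hmne γ (q.2 : V → ℝ)) ≤ 1 :=
    fun q => by nlinarith [q.1.2.1, q.1.2.2, tauC_le_one hmne hγβ (q.2 : V → ℝ)]
  refine ContinuousMap.Homotopy.trans
    (?_ : ContinuousMap.Homotopy (ContinuousMap.id _) rmap) ?_
  · exact {
      toFun := fun q =>
        ⟨(1 - (1 - (q.1 : ℝ) * (1 - tauC σm hmne γ (q.2 : V → ℝ)))) • b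
          + (1 - (q.1 : ℝ) * (1 - tauC σm hmne γ (q.2 : V → ℝ))) • (q.2 : V → ℝ),
         hmem _ q.2.2 _ (hTge q) (hTle q)⟩
      continuous_toFun := Continuous.subtype_mk
        (((continuous_const.sub hTc).smul continuous_const).add (hTc.smul hxc)) _
      map_zero_left := fun x => by ext v; simp
      map_one_left := fun x => by ext v; simp [rmap]; try ring }
  · refine {
      toFun := fun q =>
        ⟨(1 - (q.1 : ℝ)) • ((1 - tauC σm hmne γ (q.2 : V → ℝ)) • b
            + tauC σm hmne γ (q.2 : V → ℝ) • (q.2 : V → ℝ)) + (q.1 : ℝ) • p,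
         hlin _ (hmem _ q.2.2 _ le_rfl (tauC_le_one hmne hγβ (q.2 : V → ℝ)))
           (hrge (q.2 : V → ℝ)) _ q.1.2.1 q.1.2.2⟩
      continuous_toFun := Continuous.subtype_mk
        (((continuous_const.sub hsc).smul
            (((continuous_const.sub hτq).smul continuous_const).add (hτq.smul hxc))).add
          (hsc.smul continuous_const)) _
      map_zero_left := fun x => by ext v; simp [rmap]
      map_one_left := fun x => by ext v; simp }
end CPart

/-- for a non-critical vector `(σ⁻, σ⁺)` of a combinatorial
vector field (so that `σ⁻` is a facet of `σ⁺`) and `0 < γ < 1/(d+1)`, the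
sets `A_σ`, `B_σ` and `C_σ = A_σ ∩ B_σ` are contractible. -/
theorem ABC_contractible {V : Type*} [Fintype V] [DecidableEq V]
    (K : Set (Finset V)) (d : ℕ)
    (hne : ∀ σ ∈ K, σ.Nonempty)
    (hK : ∀ σ ∈ K, ∀ τ : Finset V, τ ⊆ σ → τ.Nonempty → τ ∈ K)
    (hdim : ∀ σ ∈ K, σ.card ≤ d + 1)
    (γ : ℝ) (hγ0 : 0 < γ) (hγ : γ < 1 / (d + 1))
    (σm σp : Finset V) (hm : σm ∈ K) (hp : σp ∈ K)
    (hmne : σm.Nonempty) (hsub : σm ⊆ σp) (hneq : σm ≠ σp)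
    (hcodim : (σp \ σm).card = 1) :
    ContractibleSpace
      (↥({x | x ∈ gsS (↑σp : Set V) ∧ ∀ v ∈ σm, γ ≤ x v} ∪ gsS (↑σm : Set V))) ∧
    ContractibleSpace
      (↥{x | x ∈ gsS (↑σp : Set V) ∧ ∃ v ∈ σm, x v ≤ γ}) ∧
    ContractibleSpace
      (↥(({x | x ∈ gsS (↑σp : Set V) ∧ ∀ v ∈ σm, γ ≤ x v} ∪ gsS (↑σm : Set V)) ∩
          {x | x ∈ gsS (↑σp : Set V) ∧ ∃ v ∈ σm, x v ≤ γ})) := by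
  classical
  obtain ⟨w, hwset⟩ := Finset.card_eq_one.mp hcodim
  have hwmem : w ∈ σp \ σm := hwset ▸ Finset.mem_singleton_self w
  have hw : w ∈ σp := (Finset.mem_sdiff.mp hwmem).1
  have hwm : w ∉ σm := (Finset.mem_sdiff.mp hwmem).2
  have hcard0 : 0 < (σm.card : ℝ) := by exact_mod_cast Finset.card_pos.mpr hmne
  have hmd : σm.card ≤ d := by
    have h1 : σp.card ≤ d + 1 := hdim σp hp
    have h2 : σm.card < σp.card := Finset.card_lt_card (hsub.ssubset_of_ne hneq)
    omega
  have hγβ : γ < (σm.card : ℝ)⁻¹ := by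
    refine lt_of_lt_of_le hγ ?_
    rw [one_div]
    refine inv_anti₀ hcard0 ?_
    have : (σm.card : ℝ) ≤ d := by exact_mod_cast hmd
    linarith
  have hβ0 : 0 < (σm.card : ℝ)⁻¹ := inv_pos.mpr hcard0
  have hb : baryC σm ∈ gsS (↑σm : Set V) := baryC_mem hmne
  have hbp : baryC σm ∈ gsS (↑σp : Set V) := gsS_mono (Finset.coe_subset.mpr hsub) hb
  have hbval : ∀ v ∈ σm, baryC σm v = (σm.card : ℝ)⁻¹ := fun v hv => by simp [baryC, hv]
  refine ⟨?_, ?_, C_contr σm σp hmne hsub w hw hwm γ hγ0 hγβ⟩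
  · -- A is star-shaped about the barycenter of σm
    refine starShaped_contractible _ (Or.inr hb) ?_
    rintro x (⟨hxp, hxγ⟩ | hxm) t ht0 ht1
    · left
      refine ⟨gsS_convex hxp hbp ht0 ht1, fun v hv => ?_⟩
      have : ((1 - t) • x + t • baryC σm) v = (1 - t) * x v + t * baryC σm v := by simp
      rw [this, hbval v hv]
      have := hxγ v hv
      nlinarith
    · right
      exact gsS_convex hxm hb ht0 ht1
  · -- B is star-shaped about the vertex w
    obtain ⟨vm, hvm⟩ := hmne
    have hvmw : vm ≠ w := fun h => hwm (h ▸ hvm)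
    refine starShaped_contractible _
      ⟨vertC_mem hw, vm, hvm, by simp [vertC, hvmw, hγ0.le]⟩ ?_
    rintro x ⟨hxp, v, hv, hvγ⟩ t ht0 ht1
    have hvw : v ≠ w := fun h => hwm (h ▸ hv)
    refine ⟨gsS_convex hxp (vertC_mem hw) ht0 ht1, v, hv, ?_⟩
    have : ((1 - t) • x + t • vertC w) v = (1 - t) * x v + t * vertC w v := by simp
    rw [this, show vertC w v = 0 from if_neg hvw]
    have := hxp.1 v
    nlinarith
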